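/- If J and L are in canonical form with J the standard symplectic matrix and L = diag(L₊, L₋) block diagonal with L₊, L₋ invertible Hermitian, then ν ≠ 0 is an eigenvalue of JL if and only if λ = ν² is a characteristic value of the linear pencil ℒ(λ) = L₊ + λL₋⁻¹. -/

import Mathlib

open Matrix

/-- For `J` the standard symplectic matrix and `L = diag(L₊, L₋)` with `L₊, L₋` invertible
Hermitian, `ν ≠ 0` is an eigenvalue of `JL` iff `λ = ν²` is a characteristic value of the
linear pencil `ℒ(λ) = L₊ + λ L₋⁻¹`. -/
theorem canonical_form_eigenvalue_iff_pencil
    (n : ℕ) (Lp Lm : Matrix (Fin n) (Fin n) ℂ)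
    (hLp : Lpᴴ = Lp) (hLm : Lmᴴ = Lm)
    (hLpinv : IsUnit Lp.det) (hLminv : IsUnit Lm.det)
    (ν : ℂ) (hν : ν ≠ 0) :
    (Matrix.fromBlocks (0 : Matrix (Fin n) (Fin n) ℂ) 1 (-1) 0 *
        Matrix.fromBlocks Lp 0 0 Lm - ν • 1).det = 0 ↔
      (Lp + ν ^ 2 • Lm⁻¹).det = 0 := by
  have hM : Matrix.fromBlocks (0 : Matrix (Fin n) (Fin n) ℂ) 1 (-1) 0 *
        Matrix.fromBlocks Lp 0 0 Lm - ν • 1 =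
      Matrix.fromBlocks (-(ν • (1 : Matrix (Fin n) (Fin n) ℂ))) Lm (-Lp)
        (-(ν • (1 : Matrix (Fin n) (Fin n) ℂ))) := by
    rw [Matrix.fromBlocks_multiply]
    rw [show (1 : Matrix (Fin n ⊕ Fin n) (Fin n ⊕ Fin n) ℂ) =
        Matrix.fromBlocks 1 0 0 1 from (Matrix.fromBlocks_one).symm]
    rw [Matrix.fromBlocks_smul, sub_eq_add_neg, Matrix.fromBlocks_neg, Matrix.fromBlocks_add]
    congr 1 <;> simp [sub_eq_add_neg]
  letI : Invertible (-(ν • (1 : Matrix (Fin n) (Fin n) ℂ))) :=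
    ⟨-(ν⁻¹ • 1), by simp [smul_smul, inv_mul_cancel₀ hν, mul_inv_cancel₀ hν],
      by simp [smul_smul, inv_mul_cancel₀ hν, mul_inv_cancel₀ hν]⟩
  have hinvOf : ⅟(-(ν • (1 : Matrix (Fin n) (Fin n) ℂ))) = -(ν⁻¹ • 1) := rfl
  rw [hM, Matrix.det_fromBlocks₁₁, hinvOf]
  have hLmLm : Lm⁻¹ * Lm = 1 := Matrix.nonsing_inv_mul Lm hLminv
  have h2 : -(ν • (1 : Matrix (Fin n) (Fin n) ℂ)) - -Lp * -(ν⁻¹ • 1) * Lm =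
      (-ν⁻¹) • ((Lp + ν ^ 2 • Lm⁻¹) * Lm) := by
    have hpm : (Lp + ν ^ 2 • Lm⁻¹) * Lm = Lp * Lm + ν ^ 2 • 1 := by
      rw [add_mul, Matrix.smul_mul, hLmLm]
    rw [hpm, smul_add, smul_smul, neg_mul_neg, Matrix.mul_smul, mul_one, Matrix.smul_mul]
    rw [show -ν⁻¹ * ν ^ 2 = -ν by field_simp]
    simp only [neg_smul]
    abel
  rw [h2]
  rw [show -(ν • (1 : Matrix (Fin n) (Fin n) ℂ)) = (-ν) • 1 by simp]
  rw [Matrix.det_smul, Matrix.det_smul, Matrix.det_one, mul_one, Fintype.card_fin]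
  rw [Matrix.det_mul]
  have hc : (-ν) ^ n * ((-ν⁻¹) ^ n * ((Lp + ν ^ 2 • Lm⁻¹).det * Lm.det)) =
      (Lp + ν ^ 2 • Lm⁻¹).det * Lm.det := by
    rw [← mul_assoc, ← mul_pow]
    field_simp
    rw [one_pow, one_mul]
  rw [hc, mul_eq_zero]
  have : Lm.det ≠ 0 := hLminv.ne_zero
  tauto
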